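/- Let (G,≾) be a compatible quasi-ordered abelian group. Then ≾ is valuational (i.e. there exists a valuation v on G with g ≾ h ⇔ v(g) ≥ v(h) for all g, h) if and only if every element of G is v-type. -/

import Mathlib

universe u

variable {G : Type u} [AddCommGroup G]

/-- `r` is a total quasi-order: reflexive, transitive, any two elements comparable. -/
def TotalQO (r : G → G → Prop) : Prop :=
  (∀ x, r x x) ∧ (∀ x y z, r x y → r y z → r x z) ∧ (∀ x y, r x y ∨ r y x)

/-- Axiom (Q1): `x ∼ 0 → x = 0`. -/
def AxQ1 (r : G → G → Prop) : Prop := ∀ x, r x 0 → r 0 x → x = 0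

/-- Axiom (Q2): `x ≾ y ∧ ¬(y ∼ z) → x + z ≾ y + z`. -/
def AxQ2 (r : G → G → Prop) : Prop :=
  ∀ x y z, r x y → ¬(r y z ∧ r z y) → r (x + z) (y + z)

/-- A compatible quasi-ordered abelian group: a total quasi-order satisfying (Q1) and (Q2). -/
def Compatible (r : G → G → Prop) : Prop := TotalQO r ∧ AxQ1 r ∧ AxQ2 r

/-- `g` is o-type: its `∼`-class is a singleton and `g` does not have order 2. -/
def OType (r : G → G → Prop) (g : G) : Prop :=
  (∀ h, r h g → r g h → h = g) ∧ (g + g = 0 → g = 0)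

/-- `g` is v-type: its `∼`-class is not a singleton, or `g + g = 0`. -/
def VType (r : G → G → Prop) (g : G) : Prop :=
  (∃ h, h ≠ g ∧ r h g ∧ r g h) ∨ g + g = 0

/-- A group valuation with values in `WithTop Γ` (`⊤` playing the role of `∞`). -/
def IsValuation {A : Type u} [AddCommGroup A] {Γ : Type u} [LinearOrder Γ]
    (v : A → WithTop Γ) : Prop :=
  (∀ g, v g = ⊤ ↔ g = 0) ∧ (∀ g, v (-g) = v g) ∧
  (∀ g h, min (v g) (v h) ≤ v (g + h))

/-- A quasi-order is valuational if it is induced by some valuation: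
`g ≾ h ↔ v g ≥ v h`. -/
def Valuational {A : Type u} [AddCommGroup A] (r : A → A → Prop) : Prop :=
  ∃ (Γ : Type u) (_ : LinearOrder Γ) (v : A → WithTop Γ),
    IsValuation v ∧ ∀ g h, r g h ↔ v h ≤ v g

/-- The setoid of `∼`-equivalence for a compatible quasi-order. -/
def simSetoid (r : G → G → Prop) (hc : Compatible r) : Setoid G where
  r x y := r x y ∧ r y x
  iseqv := ⟨fun x => ⟨hc.1.1 x, hc.1.1 x⟩,
    fun h => ⟨h.2, h.1⟩,
    fun h1 h2 => ⟨hc.1.2.1 _ _ _ h1.1 h2.1, hc.1.2.1 _ _ _ h2.2 h1.2⟩⟩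

/-- The reversed linear order on the quotient by `∼`. -/
noncomputable def simLO (r : G → G → Prop) (hc : Compatible r) :
    LinearOrder (Quotient (simSetoid r hc)) where
  le := Quotient.lift₂ (fun x y => r y x) (by
    intro a b c d hac hbd
    exact propext ⟨fun h => hc.1.2.1 _ _ _ hbd.2 (hc.1.2.1 _ _ _ h hac.1),
      fun h => hc.1.2.1 _ _ _ hbd.1 (hc.1.2.1 _ _ _ h hac.2)⟩)
  le_refl := fun a => Quotient.inductionOn a fun x => hc.1.1 x
  le_trans := fun a b c => Quotient.inductionOn₃ a b c
    fun x y z hxy hyz => hc.1.2.1 _ _ _ hyz hxy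
  le_antisymm := fun a b => Quotient.inductionOn₂ a b
    fun x y h1 h2 => Quotient.sound ⟨h2, h1⟩
  le_total := fun a b => Quotient.inductionOn₂ a b
    fun x y => (hc.1.2.2 y x).elim Or.inl Or.inr
  toDecidableLE := fun _ _ => Classical.dec _

/-- a compatible quasi-order is valuational iff every element of
`G` is v-type. -/
theorem valuational_iff_all_vtype (r : G → G → Prop) (hc : Compatible r) :
    Valuational r ↔ ∀ g : G, VType r g := by
  classical
  obtain ⟨⟨hrefl, htrans, htot⟩, hq1, hq2⟩ := id hc
  constructor
  · rintro ⟨Γ, _, v, ⟨hv0, hvneg, hvadd⟩, hvr⟩ g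
    by_cases hg : -g = g
    · exact Or.inr (by have := neg_add_cancel g; rw [hg] at this; exact this)
    · exact Or.inl ⟨-g, hg, (hvr _ _).2 (le_of_eq (hvneg g).symm),
        (hvr _ _).2 (le_of_eq (hvneg g))⟩
  · intro hv
    -- Fact 1 : 0 is the bottom element
    have fact1 : ∀ x, r 0 x := by
      intro x
      by_contra h0x
      have hx0 : r x 0 := (htot x 0).resolve_right h0x
      have hxne : x ≠ 0 := fun h => h0x (h ▸ hrefl 0)
      have hn0nx : ¬ (r 0 (-x) ∧ r (-x) 0) := fun h =>
        hxne (neg_eq_zero.mp (hq1 _ h.2 h.1))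
      have h0nx : r 0 (-x) := by
        have := hq2 x 0 (-x) hx0 hn0nx
        simpa using this
      have hnnx0 : ¬ r (-x) x := fun h =>
        hxne (neg_eq_zero.mp (hq1 _ (htrans _ _ _ h hx0) h0nx))
      have hnsim : ¬ (r x (-x) ∧ r (-x) x) := fun h => hnnx0 h.2
      rcases hv x with ⟨h, hne, hhx, hxh⟩ | hxx
      · have e1 : r (h - x) 0 := by
          have := hq2 h x (-x) hhx hnsim
          simpa [sub_eq_add_neg] using this
        have hnh : ¬ (r h (-x) ∧ r (-x) h) := fun hp =>
          hnnx0 (htrans _ _ _ hp.2 hhx)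
        have e2 : r 0 (h - x) := by
          have := hq2 x h (-x) hxh hnh
          simpa [sub_eq_add_neg] using this
        exact hne (sub_eq_zero.mp (hq1 _ e1 e2))
      · have : -x = x := neg_eq_of_add_eq_zero_left hxx
        exact h0x (by rw [← this]; exact h0nx)
    -- Fact 2 : x ∼ -x
    have fact2 : ∀ x, r x (-x) ∧ r (-x) x := by
      intro x
      by_contra hns
      rcases hv x with ⟨h, hne, hhx, hxh⟩ | hxx
      · have e1 : r (h - x) 0 := by
          have := hq2 h x (-x) hhx hns
          simpa [sub_eq_add_neg] using this
        have hnh : ¬ (r h (-x) ∧ r (-x) h) := fun hp =>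
          hns ⟨htrans _ _ _ hxh hp.1, htrans _ _ _ hp.2 hhx⟩
        have e2 : r 0 (h - x) := by
          have := hq2 x h (-x) hxh hnh
          simpa [sub_eq_add_neg] using this
        exact hne (sub_eq_zero.mp (hq1 _ e1 e2))
      · have : -x = x := neg_eq_of_add_eq_zero_left hxx
        exact hns (by rw [this]; exact ⟨hrefl x, hrefl x⟩)
    -- Lemma: a ≺ b → a + b ∼ b
    have lemL : ∀ a b, r a b → ¬ r b a → r (a + b) b ∧ r b (a + b) := by
      intro a b hab hnba
      have hb : r b (a + b) := by
        have := hq2 0 a b (fact1 a) (fun h => hnba h.2)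
        simpa using this
      refine ⟨?_, hb⟩
      by_contra hn
      have h1 : ¬ (r b (-(a + b)) ∧ r (-(a + b)) b) := fun hp =>
        hn (htrans _ _ _ (fact2 (a + b)).1 hp.2)
      have h2 := hq2 a b (-(a + b)) hab h1
      have e1 : a + -(a + b) = -b := by abel
      have e2 : b + -(a + b) = -a := by abel
      rw [e1, e2] at h2
      exact hnba (htrans _ _ _ (fact2 b).1 (htrans _ _ _ h2 (fact2 a).2))
    -- Ultrametric lemma : a ≾ b → a + b ≾ b
    have lemU : ∀ a b, r a b → r (a + b) b := by
      intro a b hab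
      by_cases hba : r b a
      · by_contra hn
        have hb : r b (a + b) := (htot (a + b) b).resolve_left hn
        have h1 : r (-b) (a + b) := htrans _ _ _ (fact2 b).2 hb
        have h2 : ¬ r (a + b) (-b) := fun h => hn (htrans _ _ _ h (fact2 b).2)
        obtain ⟨_, hR⟩ := lemL (-b) (a + b) h1 h2
        have e : -b + (a + b) = a := by abel
        rw [e] at hR
        exact hn (htrans _ _ _ hR hab)
      · exact (lemL a b hab hba).1
    -- Construct the valuation
    letI s := simSetoid r hc
    letI lo := simLO r hc
    set v : G → WithTop (Quotient s) :=
      fun g => if g = 0 then ⊤ else ((Quotient.mk s g : Quotient s) : WithTop (Quotient s))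
      with hvdef
    have hchar : ∀ g h : G, r g h ↔ v h ≤ v g := by
      intro g h
      by_cases hg0 : g = 0 <;> by_cases hh0 : h = 0
      · subst hg0; subst hh0; simp [hvdef, hrefl 0]
      · subst hg0
        simp only [hvdef, if_pos rfl, if_neg hh0]
        exact ⟨fun _ => le_top, fun _ => fact1 h⟩
      · subst hh0
        simp only [hvdef, if_pos rfl, if_neg hg0]
        constructor
        · intro h'
          exact absurd (hq1 g h' (fact1 g)) hg0
        · intro h'
          exact absurd (top_le_iff.mp h') (WithTop.coe_ne_top)
      · simp only [hvdef, if_neg hg0, if_neg hh0, WithTop.coe_le_coe]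
        exact Iff.rfl
    refine ⟨Quotient s, lo, v, ⟨?_, ?_, ?_⟩, fun g h => hchar g h⟩
    · intro g
      by_cases hg : g = 0 <;> simp [hvdef, hg]
    · intro g
      by_cases hg : g = 0
      · simp [hvdef, hg]
      · have hng : -g ≠ 0 := fun h => hg (neg_eq_zero.mp h)
        have : (Quotient.mk s (-g) : Quotient s) = Quotient.mk s g :=
          Quotient.sound ⟨(fact2 g).2, (fact2 g).1⟩
        simp [hvdef, hg, hng, this]
    · intro g h
      rcases htot g h with hgh | hhg
      · exact le_trans (min_le_right _ _) ((hchar _ _).1 (lemU g h hgh))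
      · have := (hchar _ _).1 (lemU h g hhg)
        rw [add_comm h g] at this
        exact le_trans (min_le_left _ _) this
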